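/- Let (X,d) be a bead space and F a multivalued mapping from X to X. Assume (x_n) is a bounded regular sequence in X, x is an asymptotic center of (x_n), y_n ∈ F(x_n) satisfy lim_n d(y_n,x_n) = 0, and limsup_n d(F(x),y_n) ≤ limsup_n d(x,x_n). If F(x) is compact, then x ∈ F(x). -/
import Mathlib


open Metric Filter

/-- A metric space `X` is a *bead space* if for every `r > 0` and `β > 0` there exists a
`δ > 0` such that for all `x y` with `d(x,y) ≥ β` there is a `z` with
`B(x,r+δ) ∩ B(y,r+δ) ⊆ B(z,r−δ)` (closed balls). -/
def IsBeadSpace (X : Type*) [MetricSpace X] : Prop :=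
  ∀ r : ℝ, 0 < r → ∀ β : ℝ, 0 < β → ∃ δ : ℝ, 0 < δ ∧
    ∀ x y : X, β ≤ dist x y → ∃ z : X,
      Metric.closedBall x (r + δ) ∩ Metric.closedBall y (r + δ) ⊆ Metric.closedBall z (r - δ)

/-- The asymptotic radius of a sequence: `inf_{z ∈ X} limsup_n d(z, uₙ)`. -/
noncomputable def asympRadius {X : Type*} [MetricSpace X] (u : ℕ → X) : ℝ :=
  ⨅ z : X, Filter.limsup (fun n => dist z (u n)) Filter.atTop

/-- `c` is an asymptotic center of the sequence `u` if `limsup_n d(c,uₙ)` equals the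
asymptotic radius of `u`. -/
def IsAsympCenter {X : Type*} [MetricSpace X] (u : ℕ → X) (c : X) : Prop :=
  Filter.limsup (fun n => dist c (u n)) Filter.atTop = asympRadius u

/-- A bounded sequence is *regular* if each of its subsequences has the same asymptotic
radius. -/
def IsRegularSeq {X : Type*} [MetricSpace X] (u : ℕ → X) : Prop :=
  ∀ φ : ℕ → ℕ, StrictMono φ → asympRadius (u ∘ φ) = asympRadius u


section auxHelpers
variable {X : Type*} [MetricSpace X]

lemma aux_bdd {u : ℕ → X} (h : Bornology.IsBounded (Set.range u)) (z : X) :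
    IsBoundedUnder (· ≤ ·) atTop (fun n => dist z (u n)) := by
  obtain ⟨C, hC⟩ := h.subset_closedBall z
  refine isBoundedUnder_of ⟨C, fun n => ?_⟩
  have := hC ⟨n, rfl⟩
  simpa [dist_comm] using this

lemma aux_nonneg {u : ℕ → X} (h : Bornology.IsBounded (Set.range u)) (z : X) :
    0 ≤ limsup (fun n => dist z (u n)) atTop :=
  le_limsup_of_frequently_le (Frequently.of_forall fun n => dist_nonneg) (aux_bdd h z)

lemma aux_radius_le {u : ℕ → X} (h : Bornology.IsBounded (Set.range u)) (z : X) :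
    asympRadius u ≤ limsup (fun n => dist z (u n)) atTop := by
  apply ciInf_le
  exact ⟨0, by rintro _ ⟨w, rfl⟩; exact aux_nonneg h w⟩

lemma aux_limsup_le_of_forall_eventually {f : ℕ → ℝ} {L : ℝ} (h0 : ∀ n, 0 ≤ f n)
    (h : ∀ ε : ℝ, 0 < ε → ∀ᶠ n in atTop, f n ≤ L + ε) :
    limsup f atTop ≤ L :=
  le_of_forall_pos_le_add fun ε hε =>
    limsup_le_of_le (isCoboundedUnder_le_of_le atTop h0) (h ε hε)

end auxHelpers

/-- **Theorem 2.3.** Let `(X,d)` be a bead space and `F` a multivalued mapping from `X`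
to `X` (nonempty values). Assume `(xₙ)` is a bounded regular sequence, `x` is an
asymptotic center of `(xₙ)`, `yₙ ∈ F(xₙ)` satisfy `d(yₙ,xₙ) → 0`, and
`limsup_n d(F(x),yₙ) ≤ limsup_n d(x,xₙ)`. If `F(x)` is compact, then `x ∈ F(x)`. -/
theorem mem_of_asympCenter_of_bead
    {X : Type*} [MetricSpace X] (hbead : IsBeadSpace X)
    (F : X → Set X) (hFne : ∀ x, (F x).Nonempty)
    (u : ℕ → X) (hbdd : Bornology.IsBounded (Set.range u))
    (hreg : IsRegularSeq u)
    (x : X) (hx : IsAsympCenter u x)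
    (y : ℕ → X) (hy : ∀ n, y n ∈ F (u n))
    (hlim : Tendsto (fun n => dist (y n) (u n)) atTop (nhds 0))
    (hsup : Filter.limsup (fun n => infDist (y n) (F x)) atTop ≤
      Filter.limsup (fun n => dist x (u n)) atTop)
    (hcpt : IsCompact (F x)) :
    x ∈ F x := by
  by_contra hxF
  -- notation
  set r := Filter.limsup (fun n => dist x (u n)) atTop with hrdef
  have hru : r = asympRadius u := hx
  have hr0 : 0 ≤ r := aux_nonneg hbdd x
  -- choose nearest points z n in F x
  choose z hzF hzd using fun n => hcpt.exists_infDist_eq_dist (hFne x) (y n)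
  -- eventual bound: ∀ ε>0, eventually dist (z n) (u n) ≤ r + ε
  have hbddInf : IsBoundedUnder (· ≤ ·) atTop (fun n => infDist (y n) (F x)) := by
    obtain ⟨w, hw⟩ := hFne x
    obtain ⟨C, hC⟩ := aux_bdd hbdd w
    obtain ⟨D, hD⟩ := hlim.isBoundedUnder_le
    rw [Filter.eventually_map] at hD
    refine ⟨D + C, Filter.eventually_map.2 ?_⟩
    filter_upwards [hC, hD] with n h1 h2
    calc infDist (y n) (F x) ≤ dist (y n) w := infDist_le_dist_of_mem hw
      _ ≤ dist (y n) (u n) + dist w (u n) := by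
          rw [dist_comm w (u n)]; exact dist_triangle _ _ _
      _ ≤ D + C := add_le_add h2 h1
  have hzev : ∀ ε : ℝ, 0 < ε → ∀ᶠ n in atTop, dist (z n) (u n) ≤ r + ε := by
    intro ε hε
    have h1 : ∀ᶠ n in atTop, infDist (y n) (F x) < r + ε / 2 := by
      apply eventually_lt_of_limsup_lt _ hbddInf
      exact lt_of_le_of_lt hsup (by linarith)
    have h2 : ∀ᶠ n in atTop, dist (y n) (u n) < ε / 2 :=
      (hlim.eventually (gt_mem_nhds (by linarith : (0:ℝ) < ε / 2)))
    filter_upwards [h1, h2] with n h1 h2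
    calc dist (z n) (u n) ≤ dist (z n) (y n) + dist (y n) (u n) := dist_triangle _ _ _
      _ = infDist (y n) (F x) + dist (y n) (u n) := by rw [dist_comm, ← hzd n]
      _ ≤ (r + ε / 2) + ε / 2 := add_le_add h1.le h2.le
      _ = r + ε := by ring
  -- extract convergent subsequence of z
  obtain ⟨a, haF, φ, hφ, hza⟩ := hcpt.tendsto_subseq hzF
  have hxa : x ≠ a := fun h => hxF (h ▸ haF)
  -- boundedness of the subsequence range
  have hbddφ : Bornology.IsBounded (Set.range (u ∘ φ)) :=
    hbdd.subset (Set.range_comp_subset_range φ u)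
  have hrφ : asympRadius (u ∘ φ) = r := by rw [hreg φ hφ, ← hru]
  -- limsup dist a (u (φ n)) ≤ r
  have ha_le : limsup (fun n => dist a ((u ∘ φ) n)) atTop ≤ r := by
    apply aux_limsup_le_of_forall_eventually (fun n => dist_nonneg)
    intro ε hε
    have h1 : ∀ᶠ n in atTop, dist (z (φ n)) (u (φ n)) ≤ r + ε / 2 :=
      hφ.tendsto_atTop.eventually (hzev (ε / 2) (by linarith))
    have h2 : ∀ᶠ n in atTop, dist a (z (φ n)) < ε / 2 := by
      have := hza.eventually (Metric.ball_mem_nhds a (by linarith : (0:ℝ) < ε / 2))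
      filter_upwards [this] with n hn
      simpa [dist_comm] using hn
    filter_upwards [h1, h2] with n h1 h2
    calc dist a ((u ∘ φ) n) ≤ dist a (z (φ n)) + dist (z (φ n)) (u (φ n)) :=
          dist_triangle _ _ _
      _ ≤ ε / 2 + (r + ε / 2) := add_le_add h2.le h1
      _ = r + ε := by ring
  -- limsup dist x (u (φ n)) ≤ r
  have hx_le : limsup (fun n => dist x ((u ∘ φ) n)) atTop ≤ r := by
    apply aux_limsup_le_of_forall_eventually (fun n => dist_nonneg)
    intro ε hε
    have h1 : ∀ᶠ n in atTop, dist x (u n) < r + ε := by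
      apply eventually_lt_of_limsup_lt _ (aux_bdd hbdd x)
      linarith [le_refl r]
    exact (hφ.tendsto_atTop.eventually h1).mono fun n hn => hn.le
  -- dist x a > 0
  have hβ : 0 < dist x a := dist_pos.mpr hxa
  rcases eq_or_lt_of_le hr0 with hr | hr
  · -- r = 0 : both limsups ≤ 0, contradiction with dist x a > 0
    have h1 : ∀ᶠ n in atTop, dist x ((u ∘ φ) n) < dist x a / 2 := by
      apply eventually_lt_of_limsup_lt _ (aux_bdd hbddφ x)
      exact lt_of_le_of_lt hx_le (by linarith)
    have h2 : ∀ᶠ n in atTop, dist a ((u ∘ φ) n) < dist x a / 2 := by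
      apply eventually_lt_of_limsup_lt _ (aux_bdd hbddφ a)
      exact lt_of_le_of_lt ha_le (by linarith)
    obtain ⟨n, h1, h2⟩ := (h1.and h2).exists
    have := dist_triangle x ((u ∘ φ) n) a
    rw [dist_comm ((u ∘ φ) n) a] at this
    linarith
  · -- r > 0 : use the bead property
    obtain ⟨δ, hδ, hb⟩ := hbead r hr (dist x a) hβ
    obtain ⟨w, hw⟩ := hb x a le_rfl
    have h1 : ∀ᶠ n in atTop, dist x ((u ∘ φ) n) < r + δ := by
      apply eventually_lt_of_limsup_lt _ (aux_bdd hbddφ x)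
      exact lt_of_le_of_lt hx_le (by linarith)
    have h2 : ∀ᶠ n in atTop, dist a ((u ∘ φ) n) < r + δ := by
      apply eventually_lt_of_limsup_lt _ (aux_bdd hbddφ a)
      exact lt_of_le_of_lt ha_le (by linarith)
    have hwlim : limsup (fun n => dist w ((u ∘ φ) n)) atTop ≤ r - δ := by
      apply aux_limsup_le_of_forall_eventually (fun n => dist_nonneg)
      intro ε hε
      filter_upwards [h1, h2] with n h1 h2
      have : (u ∘ φ) n ∈ Metric.closedBall w (r - δ) := by
        apply hw
        constructor
        · exact Metric.mem_closedBall.mpr (by rw [dist_comm]; exact h1.le)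
        · exact Metric.mem_closedBall.mpr (by rw [dist_comm]; exact h2.le)
      have := Metric.mem_closedBall.mp this
      rw [dist_comm] at this
      linarith
    have := aux_radius_le hbddφ w
    rw [hrφ] at this
    linarith
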